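/- arXiv:1505.07582 — 2 statements merged into one kernel-verified Lean document; each statement's English description precedes it below -/
import Mathlib

section
/- Suppose K is cyclotomically self-dual, with its canonical bilinear form B. A basis (r_k)_{k=1}^{R+1} of K is a Witt basis if and only if B(r_i, r_j) = 0 whenever i + j ≠ R + 2. -/
open Polynomial

noncomputable section

set_option synthInstance.maxHeartbeats 1000000
set_option maxHeartbeats 1000000

/-- The field ℂ(s) of rational functions in the variable s = x^(1/2). -/
abbrev Ff : Type := RatFunc ℂ

/-- Formal derivative d/ds on ℂ(s). -/
def dS (f : Ff) : Ff :=
  (algebraMap (Polynomial ℂ) Ff (Polynomial.derivative f.num) *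
      algebraMap (Polynomial ℂ) Ff f.denom -
    algebraMap (Polynomial ℂ) Ff f.num *
      algebraMap (Polynomial ℂ) Ff (Polynomial.derivative f.denom)) /
  (algebraMap (Polynomial ℂ) Ff f.denom) ^ 2

/-- Derivative d/dx = (2s)⁻¹ d/ds, where x = s². -/
def dX (f : Ff) : Ff := (2 * (RatFunc.X : Ff))⁻¹ * dS f

/-- Wronskian determinant with respect to x. -/
def Wr {k : ℕ} (u : Fin k → Ff) : Ff :=
  Matrix.det (Matrix.of fun i j : Fin k => dX^[(j : ℕ)] (u i))

/-- Degree in x (an element of ½ℤ realized in ℚ; junk value for f = 0). -/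
def degX (f : Ff) : ℚ := (RatFunc.intDegree f : ℚ) / 2

/-- Degree in x, as a complex number. -/
def degXC (f : Ff) : ℂ := (RatFunc.intDegree f : ℂ) / 2

/-- The map f(x) ↦ f(−x), i.e. the substitution s ↦ i·s (x^m ↦ e^{mπi} x^m). -/
def negX (f : Ff) : Ff :=
  algebraMap (Polynomial ℂ) Ff (f.num.comp (Polynomial.C Complex.I * Polynomial.X)) /
  algebraMap (Polynomial ℂ) Ff (f.denom.comp (Polynomial.C Complex.I * Polynomial.X))

/-- Quasi-polynomials: polynomials in s = x^(1/2). -/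
def IsQP (f : Ff) : Prop := ∃ p : Polynomial ℂ, f = algebraMap (Polynomial ℂ) Ff p

/-- Elements of ℂ[x] (even quasi-polynomials). -/
def IsEvenQP (f : Ff) : Prop :=
  ∃ p : Polynomial ℂ, f = algebraMap (Polynomial ℂ) Ff (p.comp (Polynomial.X ^ 2))

/-- Elements of x^(1/2)·ℂ[x] (odd quasi-polynomials). -/
def IsOddQP (f : Ff) : Prop :=
  ∃ p : Polynomial ℂ, f = RatFunc.X * algebraMap (Polynomial ℂ) Ff (p.comp (Polynomial.X ^ 2))

/-- The subspace ℂ[x] of Ff. -/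
def evenSub : Submodule ℂ Ff := Submodule.span ℂ {f | IsEvenQP f}

/-- The subspace x^(1/2)·ℂ[x] of Ff. -/
def oddSub : Submodule ℂ Ff := Submodule.span ℂ {f | IsOddQP f}

/-- A subspace V is decomposable if V = (V ∩ ℂ[x]) ⊕ (V ∩ x^(1/2)ℂ[x]). -/
def Decomposable (K : Submodule ℂ Ff) : Prop := K = (K ⊓ evenSub) ⊔ (K ⊓ oddSub)

/-- The simple root α_i = ε_{i+1} − ε_i of type A_R. -/
def alphaV (R : ℕ) (i : Fin R) : Fin (R+1) → ℂ :=
  fun j => (if j = Fin.succ i then 1 else 0) - (if j = Fin.castSucc i then 1 else 0)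

/-- The pairing ⟨λ, α_i^∨⟩ = λ_{i+1} − λ_i. -/
def pairA (R : ℕ) (lam : Fin (R+1) → ℂ) (i : Fin R) : ℂ := lam (Fin.succ i) - lam (Fin.castSucc i)

/-- The simple reflection s_i(λ) = λ − ⟨λ, α_i^∨⟩ α_i. -/
def reflA (R : ℕ) (i : Fin R) (lam : Fin (R+1) → ℂ) : Fin (R+1) → ℂ :=
  fun j => lam j - pairA R lam i * alphaV R i j

/-- A vector ρ with ⟨ρ, α_i^∨⟩ = 1 for all i. -/
def rhoV (R : ℕ) : Fin (R+1) → ℂ := fun j => ((j : ℕ) : ℂ)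

/-- sProdL R k = s_1 ∘ s_2 ∘ ⋯ ∘ s_k (in paper's 1-based indexing). -/
def sProdL (R : ℕ) : ℕ → (Fin (R+1) → ℂ) → (Fin (R+1) → ℂ)
  | 0 => fun lam => lam
  | (k+1) => fun lam => if h : k < R then sProdL R k (reflA R ⟨k, h⟩ lam) else sProdL R k lam

/-- sProdR R t = s_R ∘ s_{R-1} ∘ ⋯ ∘ s_{R-t+1} (in paper's 1-based indexing). -/
def sProdR (R : ℕ) : ℕ → (Fin (R+1) → ℂ) → (Fin (R+1) → ℂ)
  | 0 => fun lam => lam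
  | (t+1) => fun lam =>
      if h : R - 1 - t < R then sProdR R t (reflA R ⟨R - 1 - t, h⟩ lam) else sProdR R t lam

/-- d_k := ⟨Λ − (s_1 ⋯ s_{k-1})·Λ̃_∞, ε_1⟩, where · is the shifted action (0-indexed k). -/
def dVal (R : ℕ) (Lam Linf : Fin (R+1) → ℂ) (k : Fin (R+1)) : ℂ :=
  Lam 0 - (sProdL R (k : ℕ) (fun j => Linf j + rhoV R j) 0 - rhoV R 0)

/-- d†_k := −⟨Λ − (s_R ⋯ s_k)·Λ̃_∞, ε_{R+1}⟩ (0-indexed k). -/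
def dDag (R : ℕ) (Lam Linf : Fin (R+1) → ℂ) (k : Fin (R+1)) : ℂ :=
  -(Lam (Fin.last R) -
    (sProdR R (R - (k : ℕ)) (fun j => Linf j + rhoV R j) (Fin.last R) - rhoV R (Fin.last R)))

/-- M_i = 1 if R = 2n−1 and i = n (paper indexing: i is (i:ℕ)+1), else 2. -/
def Mi' (R n : ℕ) (i : Fin R) : ℕ := if R = 2*n - 1 ∧ (i : ℕ) + 1 = n then 1 else 2

/-- The standing type-A data and assumptions of the paper, Section 6. -/
structure TypeASetting where
  R : ℕ
  n : ℕ
  p : ℕ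
  N : ℕ
  hR1 : 1 ≤ R
  hRn : R = 2*n - 1 ∨ R = 2*n
  hpn : p ≤ n
  /-- the dominant integral weights Λ_1, …, Λ_N -/
  Lam : Fin N → Fin (R+1) → ℂ
  /-- the weights σΛ_1, …, σΛ_N -/
  sLam : Fin N → Fin (R+1) → ℂ
  /-- the weight Λ_0 at the origin -/
  Lam0 : Fin (R+1) → ℂ
  /-- the dominant weight Λ̃_∞ -/
  Linf : Fin (R+1) → ℂ
  /-- the marked points z_1, …, z_N -/
  z : Fin N → ℂ
  /-- integer witnesses: e0 i = 2⟨Λ_0, α_i^∨⟩ -/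
  e0 : Fin R → ℤ
  /-- natural number witnesses: mL s i = ⟨Λ_s, α_i^∨⟩ -/
  mL : Fin N → Fin R → ℕ
  hmL : ∀ s i, ((mL s i : ℕ) : ℂ) = pairA R (Lam s) i
  hsLam : ∀ s i, pairA R (sLam s) i = pairA R (Lam s) (Fin.rev i)
  hLam0sym : ∀ i, pairA R Lam0 i = pairA R Lam0 (Fin.rev i)
  he0 : ∀ i, ((e0 i : ℤ) : ℂ) = 2 * pairA R Lam0 i
  hLam0int : ∀ i : Fin R, (i : ℕ) + 1 ≠ p → (i : ℕ) + 1 ≠ R + 1 - p →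
      ∃ m : ℕ, ((Mi' R n i : ℕ) : ℂ) * pairA R Lam0 i = 2 * m
  hLam0p : 0 < p → ∀ i : Fin R, (i : ℕ) + 1 = p →
      (2 * p ≤ R → ∃ m : ℕ, pairA R Lam0 i = (2 * (m : ℂ) - 1) / 2) ∧
      (p = n → R = 2*n - 1 → ∃ m : ℕ, pairA R Lam0 i = 2 * (m : ℂ) + 1)
  hz0 : ∀ s, z s ≠ 0
  hzz : ∀ s t, s ≠ t → z s ≠ z t ∧ z s ≠ - z t
  hLinfDom : ∀ i, ∃ r : ℝ, 0 ≤ r ∧ pairA R Linf i = (r : ℂ)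
  hroot : ∃ kc : Fin R → ℕ, ∀ j,
      (Lam0 j + ∑ s, (Lam s j + sLam s j)) - Linf j = ∑ i, ((kc i : ℕ) : ℂ) * alphaV R i j
  hdchain : ∃ dr : Fin (R+1) → ℚ,
      (∀ k, dVal R (fun j => Lam0 j + ∑ s, (Lam s j + sLam s j)) Linf k = ((dr k : ℚ) : ℂ)) ∧
      0 ≤ dr 0 ∧ StrictMono dr

namespace TypeASetting

/-- The weight Λ = Λ_0 + Σ_s (Λ_s + σΛ_s). -/
def LamT (S : TypeASetting) : Fin (S.R+1) → ℂ :=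
  fun j => S.Lam0 j + ∑ s, (S.Lam s j + S.sLam s j)

/-- The exponents d_1, …, d_{R+1} (0-indexed). -/
def d (S : TypeASetting) (k : Fin (S.R+1)) : ℂ := dVal S.R S.LamT S.Linf k

/-- The dual exponents d†_1, …, d†_{R+1} (0-indexed). -/
def ddag (S : TypeASetting) (k : Fin (S.R+1)) : ℂ := dDag S.R S.LamT S.Linf k

/-- T̃_i(x) = x^{⟨Λ_0,α_i^∨⟩} ∏_s (x−z_s)^{⟨Λ_s,α_i^∨⟩} (x+z_s)^{⟨Λ_s,α_{R+1−i}^∨⟩},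
with x = s² (so x^{⟨Λ_0,α_i^∨⟩} = s^{e0 i}); defined on ℕ with junk value 1 for i ≥ R. -/
def T (S : TypeASetting) (i : ℕ) : Ff :=
  if h : i < S.R then
    (RatFunc.X : Ff) ^ (S.e0 ⟨i, h⟩) *
      ∏ s, algebraMap (Polynomial ℂ) Ff
        ((Polynomial.X ^ 2 - Polynomial.C (S.z s)) ^ (S.mL s ⟨i, h⟩) *
         (Polynomial.X ^ 2 + Polynomial.C (S.z s)) ^ (S.mL s (Fin.rev ⟨i, h⟩)))
  else 1

/-- Divided Wronskian Wr†(u_1,…,u_k) = Wr(u_1,…,u_k)/(T̃_1^{k−1} ⋯ T̃_{k−1}). -/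
def WrD (S : TypeASetting) {k : ℕ} (u : Fin k → Ff) : Ff :=
  Wr u / ∏ j ∈ Finset.range (k - 1), S.T j ^ (k - 1 - j)

/-- K has frame T̃_1,…,T̃_R; Λ̃_∞: conditions (i), (ii), (iii) of Definition 6.5. -/
def HasFrame (S : TypeASetting) (K : Submodule ℂ Ff) : Prop :=
  (∀ f ∈ K, IsQP f) ∧
  (∃ u : Fin (S.R+1) → Ff, (∀ k, u k ∈ K) ∧ LinearIndependent ℂ u ∧
      Submodule.span ℂ (Set.range u) = K ∧ ∀ k, degXC (u k) = S.d k) ∧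
  (∀ kk : ℕ, 1 ≤ kk → kk ≤ S.R + 1 → ∀ zz : ℂ, zz ≠ 0 →
    (∀ v : Fin kk → Ff, (∀ j, v j ∈ K) → ∀ s0 : ℂ, s0 ^ 2 = zz →
        Polynomial.eval s0 (RatFunc.denom (S.WrD v)) ≠ 0) ∧
    (∃ v : Fin kk → Ff, (∀ j, v j ∈ K) ∧ ∃ s0 : ℂ, s0 ^ 2 = zz ∧
        RatFunc.eval (RingHom.id ℂ) s0 (S.WrD v) ≠ 0)) ∧
  (∀ kk : ℕ, 1 ≤ kk → kk ≤ S.R + 1 →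
    (∀ v : Fin kk → Ff, (∀ j, v j ∈ K) →
        Polynomial.eval 0 (RatFunc.denom (S.WrD v)) ≠ 0) ∧
    (∃ v : Fin kk → Ff, (∀ j, v j ∈ K) ∧
        RatFunc.eval (RingHom.id ℂ) 0 (S.WrD v) ≠ 0))

/-- The dual space K† = span{Wr†(v_1,…,v_R) : v_i ∈ K}. -/
def Kdag (S : TypeASetting) (K : Submodule ℂ Ff) : Submodule ℂ Ff :=
  Submodule.span ℂ {f | ∃ v : Fin S.R → Ff, (∀ j, v j ∈ K) ∧ f = S.WrD v}

/-- K is cyclotomically self-dual: u(x) ∈ K ⟺ u(−x) ∈ K†. -/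
def SelfDual (S : TypeASetting) (K : Submodule ℂ Ff) : Prop :=
  ∀ f : Ff, IsQP f → (f ∈ K ↔ negX f ∈ S.Kdag K)

/-- B is the canonical bilinear form: B(u,v) = Wr†(u, w_1,…,w_R) whenever
v(−x) = Wr†(w_1,…,w_R) with w_i ∈ K. -/
def IsB (S : TypeASetting) (K : Submodule ℂ Ff) (B : Ff → Ff → ℂ) : Prop :=
  ∀ u v : Ff, u ∈ K → v ∈ K → ∀ w : Fin S.R → Ff, (∀ j, w j ∈ K) → negX v = S.WrD w →
    algebraMap ℂ Ff (B u v) = S.WrD (Fin.cons u w)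

/-- A special basis of K: a decomposable basis with deg u_k = d_k. -/
def SpecialBasis (S : TypeASetting) (K : Submodule ℂ Ff) (u : Fin (S.R+1) → Ff) : Prop :=
  (∀ k, u k ∈ K) ∧ LinearIndependent ℂ u ∧ Submodule.span ℂ (Set.range u) = K ∧
  (∀ k, degXC (u k) = S.d k) ∧ ∀ k, IsEvenQP (u k) ∨ IsOddQP (u k)

/-- K_Sp = span(u_1,…,u_p, u_{R+2−p},…,u_{R+1}) (0-indexed). -/
def KSp (S : TypeASetting) (u : Fin (S.R+1) → Ff) : Submodule ℂ Ff :=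
  Submodule.span ℂ {f | ∃ k : Fin (S.R+1), ((k : ℕ) < S.p ∨ S.R + 1 - S.p ≤ (k : ℕ)) ∧ f = u k}

/-- K_O = span(u_{p+1},…,u_{R+1−p}) (0-indexed). -/
def KO (S : TypeASetting) (u : Fin (S.R+1) → Ff) : Submodule ℂ Ff :=
  Submodule.span ℂ {f | ∃ k : Fin (S.R+1), (S.p ≤ (k : ℕ) ∧ (k : ℕ) < S.R + 1 - S.p) ∧ f = u k}

end TypeASetting

/-- A full flag 0 = F_0 ⊂ F_1 ⊂ ⋯ ⊂ F_{R+1} = K. -/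
def IsFlag (R : ℕ) (K : Submodule ℂ Ff) (Fl : Fin (R+2) → Submodule ℂ Ff) : Prop :=
  Fl 0 = ⊥ ∧ Fl (Fin.last (R+1)) = K ∧ StrictMono Fl

/-- A basis adjusted to the flag Fl: F_k = span(u_1,…,u_k) for all k. -/
def AdjustedBasis (R : ℕ) (Fl : Fin (R+2) → Submodule ℂ Ff) (u : Fin (R+1) → Ff) : Prop :=
  ∀ k : Fin (R+2), Fl k = Submodule.span ℂ {f | ∃ j : Fin (R+1), (j : ℕ) < (k : ℕ) ∧ f = u j}

namespace TypeASetting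

/-- The tuple β(F): y_k = Wr†(u_1,…,u_k), k = 1,…,R (0-indexed). -/
def flagTuple (S : TypeASetting) (u : Fin (S.R+1) → Ff) (k : Fin S.R) : Ff :=
  S.WrD fun j : Fin ((k : ℕ) + 1) => u (Fin.castLE (Nat.succ_le_succ (le_of_lt k.isLt)) j)

end TypeASetting

/-- A tuple (y_1,…,y_R) of nonzero elements is cyclotomic if y_k(−x) ≃ y_{R+1−k}(x). -/
def CycTupleA (R : ℕ) (y : Fin R → Ff) : Prop :=
  (∀ k, y k ≠ 0) ∧ ∀ k, ∃ c : ℂ, c ≠ 0 ∧ negX (y k) = algebraMap ℂ Ff c * y (Fin.rev k)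

namespace TypeASetting

/-- The tuple β(F) (computed from any adjusted basis) is cyclotomic. -/
def BetaCyc (S : TypeASetting) (Fl : Fin (S.R+2) → Submodule ℂ Ff) : Prop :=
  ∀ u : Fin (S.R+1) → Ff, AdjustedBasis S.R Fl u → CycTupleA S.R (S.flagTuple u)

/-- The flag Fl is isotropic with respect to B: F_k = F_{R+1−k}^⊥ for k = 1,…,R. -/
def IsotropicFlag (S : TypeASetting) (K : Submodule ℂ Ff) (B : Ff → Ff → ℂ)
    (Fl : Fin (S.R+2) → Submodule ℂ Ff) : Prop :=
  ∀ k : Fin S.R,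
    (Fl ⟨(k : ℕ) + 1, by have := k.isLt; omega⟩ : Set Ff) =
      {v : Ff | v ∈ K ∧ ∀ u ∈ Fl ⟨S.R - (k : ℕ), by omega⟩, B u v = 0}

end TypeASetting

/-- Omission of the k-th entry from an (m+1)-tuple. -/
def omitTuple {m : ℕ} (r : Fin (m+1) → Ff) (k : Fin (m+1)) : Fin m → Ff :=
  fun j => r (k.succAbove j)

section Helpers

set_option synthInstance.maxHeartbeats 1000000
set_option maxHeartbeats 1000000

local notation "aM" => algebraMap (Polynomial ℂ) Ff

lemma aM_inj : Function.Injective (aM) := RatFunc.algebraMap_injective ℂ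

lemma aM_ne_zero {p : Polynomial ℂ} (hp : p ≠ 0) : aM p ≠ 0 :=
  fun h => hp (aM_inj (by simpa using h))

lemma dS_eq {f : Ff} {a b : Polynomial ℂ} (hb : b ≠ 0) (hf : f = aM a / aM b) :
    dS f = (aM (derivative a) * aM b - aM a * aM (derivative b)) / (aM b) ^ 2 := by
  have hd : f.denom ≠ 0 := f.denom_ne_zero
  have hdF : (aM f.denom) ≠ 0 := aM_ne_zero hd
  have hbF : (aM b) ≠ 0 := aM_ne_zero hb
  have h1 : aM f.num / aM f.denom = aM a / aM b := by rw [RatFunc.num_div_denom]; exact hf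
  rw [div_eq_div_iff hdF hbF] at h1
  rw [← map_mul, ← map_mul] at h1
  have hcross : f.num * b = a * f.denom := aM_inj h1
  have hder : derivative f.num * b + f.num * derivative b
      = derivative a * f.denom + a * derivative f.denom := by
    have := congrArg derivative hcross
    simpa [derivative_mul] using this
  show _ / _ = _
  rw [div_eq_div_iff (pow_ne_zero 2 hdF) (pow_ne_zero 2 hbF)]
  rw [← map_pow, ← map_pow, ← map_mul, ← map_mul, ← map_mul, ← map_mul, ← map_sub, ← map_sub,
    ← map_mul, ← map_mul]
  refine congrArg _ ?_
  linear_combination (f.denom * b) * hder - (derivative f.denom * b + f.denom * derivative b) * hcross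


lemma ffRepr (f : Ff) : f = aM f.num / aM f.denom := (RatFunc.num_div_denom f).symm

lemma dS_add (f g : Ff) : dS (f + g) = dS f + dS g := by
  have hdf : (aM f.denom) ≠ 0 := aM_ne_zero f.denom_ne_zero
  have hdg : (aM g.denom) ≠ 0 := aM_ne_zero g.denom_ne_zero
  have hfg : f + g = aM (f.num * g.denom + g.num * f.denom) / aM (f.denom * g.denom) := by
    conv_lhs => rw [ffRepr f, ffRepr g]
    rw [div_add_div _ _ hdf hdg]
    push_cast [map_add, map_mul]
    ring_nf
  rw [dS_eq (mul_ne_zero f.denom_ne_zero g.denom_ne_zero) hfg,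
    dS_eq f.denom_ne_zero (ffRepr f), dS_eq g.denom_ne_zero (ffRepr g)]
  simp only [derivative_add, derivative_mul, map_add, map_mul]
  field_simp
  ring

lemma algMapC (c : ℂ) : algebraMap ℂ Ff c = aM (C c) := by
  rw [IsScalarTower.algebraMap_apply ℂ (Polynomial ℂ) Ff]
  rfl

lemma dS_smul (c : ℂ) (f : Ff) : dS (c • f) = c • dS f := by
  have hdf : (aM f.denom) ≠ 0 := aM_ne_zero f.denom_ne_zero
  have hsm : ∀ h : Ff, c • h = aM (C c) * h := by
    intro h; rw [Algebra.smul_def, algMapC]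
  have hcf : c • f = aM (C c * f.num) / aM f.denom := by
    rw [hsm, map_mul, mul_div_assoc, ← ffRepr]
  rw [dS_eq f.denom_ne_zero hcf, dS_eq f.denom_ne_zero (ffRepr f), hsm]
  simp only [derivative_mul, derivative_C, map_add, map_mul, map_zero]
  field_simp
  ring

lemma dX_add (f g : Ff) : dX (f + g) = dX f + dX g := by
  unfold dX; rw [dS_add, mul_add]

lemma dX_smul (c : ℂ) (f : Ff) : dX (c • f) = c • dX f := by
  unfold dX; rw [dS_smul, mul_smul_comm]

/-- d/dx as a ℂ-linear map. -/
def dXL : Ff →ₗ[ℂ] Ff where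
  toFun := dX
  map_add' := dX_add
  map_smul' := dX_smul

lemma dX_iter_linear (j : ℕ) : ∃ L : Ff →ₗ[ℂ] Ff, ∀ f, dX^[j] f = L f := by
  induction j with
  | zero => exact ⟨LinearMap.id, fun f => rfl⟩
  | succ n ih =>
    obtain ⟨L, hL⟩ := ih
    exact ⟨dXL.comp L, fun f => by
      rw [Function.iterate_succ_apply', LinearMap.comp_apply, ← hL]; rfl⟩

/-- the row of iterated derivatives, as a ℂ-linear map. -/
def rowL (k : ℕ) : Ff →ₗ[ℂ] (Fin k → Ff) :=
  LinearMap.pi (fun j : Fin k => Classical.choose (dX_iter_linear (j : ℕ)))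

lemma rowL_apply (k : ℕ) (f : Ff) (j : Fin k) : rowL k f j = dX^[(j:ℕ)] f := by
  rw [rowL, LinearMap.pi_apply, ← Classical.choose_spec (dX_iter_linear (j:ℕ)) f]

set_option synthInstance.maxHeartbeats 1000000 in
/-- The Wronskian as a multilinear map. -/
def WM (k : ℕ) : MultilinearMap ℂ (fun _ : Fin k => Ff) Ff :=
  (((Matrix.detRowAlternating :
      AlternatingMap Ff (Fin k → Ff) Ff (Fin k)).toMultilinearMap.restrictScalars
    ℂ).compLinearMap (fun _ => rowL k))

lemma WM_apply {k : ℕ} (u : Fin k → Ff) :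
    WM k u = Matrix.det (Matrix.of fun i j : Fin k => dX^[(j : ℕ)] (u i)) := by
  have h : (Matrix.of fun i j : Fin k => rowL k (u i) j)
      = (Matrix.of fun i j : Fin k => dX^[(j : ℕ)] (u i)) := by
    apply Matrix.ext; intro i j; simp only [Matrix.of_apply]; exact rowL_apply k (u i) j
  show Matrix.detRowAlternating _ = _
  rw [← h]
  rfl

/-- The Wronskian as an alternating map. -/
def WA (k : ℕ) : AlternatingMap ℂ Ff Ff (Fin k) :=
  { WM k with
    map_eq_zero_of_eq' := by
      intro v i j hv hij
      have h : WM k v = 0 := by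
        rw [WM_apply]
        exact Matrix.det_zero_of_row_eq hij (funext fun t => by simp [hv])
      exact h }

lemma WA_apply {k : ℕ} (u : Fin k → Ff) : WA k u = WM k u := rfl

lemma Wr_eq_WA {k : ℕ} (u : Fin k → Ff) : Wr u = WA k u := by
  rw [Wr, WA_apply, WM_apply]

section CB

lemma exists_factor {R : ℕ} (f : Fin R → Fin (R+1)) (hf : Function.Injective f) :
    ∃ (m : Fin (R+1)) (σ : Equiv.Perm (Fin R)), f = fun t => m.succAbove (σ t) := by
  have hns : ∃ m : Fin (R+1), ∀ t, f t ≠ m := by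
    by_contra hc
    push_neg at hc
    have hs : Function.Surjective f := fun m => (hc m)
    have := Fintype.card_le_of_surjective f hs
    simp at this
  obtain ⟨m, hm⟩ := hns
  have hgex : ∀ t : Fin R, ∃ z : Fin R, m.succAbove z = f t := fun t =>
    Fin.exists_succAbove_eq (fun h => hm t h)
  choose g hg using hgex
  have hginj : Function.Injective g := by
    intro a b hab
    apply hf
    rw [← hg a, ← hg b, hab]
  have hgbij : Function.Bijective g := (Finite.injective_iff_bijective).mp hginj
  refine ⟨m, Equiv.ofBijective g hgbij, ?_⟩
  funext t
  rw [Equiv.ofBijective_apply, hg t]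

/-- the equivalence between pairs (m, σ) and injective maps Fin R → Fin (R+1). -/
def injEquiv (R : ℕ) :
    (Fin (R+1) × Equiv.Perm (Fin R)) ≃ {f : Fin R → Fin (R+1) // Function.Injective f} := by
  apply Equiv.ofBijective
    (fun p => (⟨fun t => p.1.succAbove (p.2 t),
      (Fin.succAbove_right_injective).comp p.2.injective⟩ :
        {f : Fin R → Fin (R+1) // Function.Injective f}))
  constructor
  · rintro ⟨m, σ⟩ ⟨m', σ'⟩ hp
    have h := congrArg (fun q => Set.range (q : Fin R → Fin (R+1))) (Subtype.ext_iff.mp hp)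
    simp only at h
    have hr : ∀ (mm : Fin (R+1)) (ττ : Equiv.Perm (Fin R)),
        Set.range (fun t => mm.succAbove (ττ t)) = ({mm}ᶜ : Set (Fin (R+1))) := by
      intro mm ττ
      show Set.range (mm.succAbove ∘ ττ) = _
      rw [Set.range_comp, Equiv.range_eq_univ, Set.image_univ, Fin.range_succAbove]
    rw [hr m σ, hr m' σ'] at h
    have hmm : m = m' := by
      by_contra hne
      have := h ▸ (Set.mem_compl_singleton_iff.mpr (Ne.symm hne) : m' ∈ ({m}ᶜ : Set _))
      simp at this
    subst hmm
    have hσ : σ = σ' := by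
      apply Equiv.ext
      intro t
      exact Fin.succAbove_right_injective (congrFun (congrArg Subtype.val hp) t)
    rw [hσ]
  · rintro ⟨f, hf⟩
    obtain ⟨m, σ, hfac⟩ := exists_factor f hf
    exact ⟨⟨m, σ⟩, Subtype.ext hfac.symm⟩

end CB

lemma det_eq_sum_perm {R : ℕ} (B : Matrix (Fin R) (Fin R) ℂ) :
    ∑ σ : Equiv.Perm (Fin R), ((Equiv.Perm.sign σ : ℤ) : ℂ) * ∏ t, B t (σ t) = B.det := by
  rw [← Matrix.det_transpose, Matrix.det_apply']
  apply Finset.sum_congr rfl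
  intro σ _
  congr 1

lemma cauchyBinet {R : ℕ} {V E : Type*} [AddCommGroup V] [Module ℂ V] [AddCommGroup E]
    [Module ℂ E] (A : AlternatingMap ℂ V E (Fin R)) (r : Fin (R+1) → V)
    (M : Fin R → Fin (R+1) → ℂ) :
    A (fun t => ∑ m, M t m • r m) =
      ∑ m : Fin (R+1), (Matrix.det (Matrix.of fun t t' : Fin R => M t (m.succAbove t'))) •
        A (fun t => r (m.succAbove t)) := by
  classical
  have h1 : A (fun t => ∑ m, M t m • r m)
      = ∑ f : Fin R → Fin (R+1), (∏ t, M t (f t)) • A (fun t => r (f t)) := by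
    rw [show A (fun t => ∑ m, M t m • r m)
        = A.toMultilinearMap (fun t => ∑ m, M t m • r m) from rfl,
      MultilinearMap.map_sum]
    apply Finset.sum_congr rfl
    intro f _
    exact A.toMultilinearMap.map_smul_univ (fun t => M t (f t)) (fun t => r (f t))
  rw [h1]
  have h2 : ∀ f : Fin R → Fin (R+1), ¬ Function.Injective f →
      (∏ t, M t (f t)) • A (fun t => r (f t)) = 0 := by
    intro f hf
    rw [Function.not_injective_iff] at hf
    obtain ⟨a, b, hab, hne⟩ := hf
    rw [AlternatingMap.map_eq_zero_of_eq A _ (by rw [hab]) hne, smul_zero]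
  rw [← Finset.sum_filter_of_ne (p := fun f => Function.Injective f)
    (fun f _ hf => by by_contra hc; exact hf (h2 f hc))]
  rw [Finset.sum_subtype (p := fun f : Fin R → Fin (R+1) => Function.Injective f)
    (Finset.univ.filter (fun f : Fin R → Fin (R+1) => Function.Injective f))
    (by intro x; simp) (fun f => (∏ t, M t (f t)) • A (fun t => r (f t)))]
  rw [← Equiv.sum_comp (injEquiv R)
    (fun f => (∏ t, M t (f.1 t)) • A (fun t => r (f.1 t)))]
  rw [Fintype.sum_prod_type]
  apply Finset.sum_congr rfl
  intro m _
  have h3 : ∀ σ : Equiv.Perm (Fin R),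
      A (fun t => r (m.succAbove (σ t)))
        = ((Equiv.Perm.sign σ : ℤ) : ℂ) • A (fun t => r (m.succAbove t)) := by
    intro σ
    have := AlternatingMap.map_perm A (fun t => r (m.succAbove t)) σ
    rw [show ((fun t => r (m.succAbove t)) ∘ σ) = fun t => r (m.succAbove (σ t)) from rfl] at this
    rw [this, Units.smul_def, Int.cast_smul_eq_zsmul]
  calc ∑ σ : Equiv.Perm (Fin R),
        (∏ t, M t (((injEquiv R) (m, σ)).1 t)) • A (fun t => r (((injEquiv R) (m, σ)).1 t))
      = ∑ σ : Equiv.Perm (Fin R),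
        (((Equiv.Perm.sign σ : ℤ) : ℂ) * ∏ t, M t (m.succAbove (σ t))) •
          A (fun t => r (m.succAbove t)) := by
        apply Finset.sum_congr rfl
        intro σ _
        rw [show ((injEquiv R) (m, σ)).1 = fun t => m.succAbove (σ t) from rfl]
        rw [h3 σ, smul_smul, mul_comm]
    _ = (Matrix.det (Matrix.of fun t t' : Fin R => M t (m.succAbove t'))) •
          A (fun t => r (m.succAbove t)) := by
        rw [← Finset.sum_smul]
        congr 1
        rw [← det_eq_sum_perm]
        apply Finset.sum_congr rfl
        intro σ _
        rfl

section Minors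

open Matrix

/-- Laplace expansion helper: determinant with prescribed first row. -/
lemma det_cons_row {R : ℕ} (x : Fin (R+1) → ℂ) (N : Fin R → Fin (R+1) → ℂ) :
    Matrix.det (Matrix.of (Matrix.vecCons x N)) =
      ∑ j : Fin (R+1), (-1) ^ (j : ℕ) * x j *
        Matrix.det (Matrix.of fun t t' : Fin R => N t (j.succAbove t')) := by
  rw [Matrix.det_succ_row_zero]
  apply Finset.sum_congr rfl
  intro j _
  congr 1

lemma exists_minor_matrix {R : ℕ} (hR : 0 < R) (c : Fin (R+1) → ℂ) (hc : c ≠ 0) :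
    ∃ M : Fin R → Fin (R+1) → ℂ, ∀ m : Fin (R+1),
      Matrix.det (Matrix.of fun t t' : Fin R => M t (m.succAbove t')) = c m := by
  classical
  set φ : (Fin (R+1) → ℂ) →ₗ[ℂ] ℂ :=
    { toFun := fun x => ∑ j : Fin (R+1), (-1 : ℂ) ^ (j : ℕ) * c j * x j
      map_add' := by
        intro x y
        rw [← Finset.sum_add_distrib]
        apply Finset.sum_congr rfl; intros; simp [mul_add]
      map_smul' := by
        intro a x
        simp only [RingHom.id_apply, Pi.smul_apply, smul_eq_mul]
        rw [Finset.mul_sum]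
        apply Finset.sum_congr rfl; intros; ring } with hφdef
  have hφapp : ∀ x, φ x = ∑ j : Fin (R+1), (-1 : ℂ) ^ (j : ℕ) * c j * x j := fun x => rfl
  obtain ⟨j0, hj0⟩ : ∃ j0, c j0 ≠ 0 := by
    by_contra hcon; push_neg at hcon; exact hc (funext hcon)
  have hφsing : ∀ m : Fin (R+1), φ (Pi.single m 1) = (-1 : ℂ) ^ (m : ℕ) * c m := by
    intro m
    rw [hφapp, Finset.sum_eq_single m (by intro b _ hb; simp [Pi.single_apply, hb])
      (by simp)]
    simp [Pi.single_apply]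
  set x0 : Fin (R+1) → ℂ := Pi.single j0 1 with hx0
  have hφne : φ x0 ≠ 0 := by
    rw [hx0, hφsing]
    exact mul_ne_zero (by apply pow_ne_zero; norm_num) hj0
  have hrange : LinearMap.range φ = ⊤ := by
    apply LinearMap.range_eq_top_of_surjective
    intro z
    refine ⟨(z / φ x0) • x0, ?_⟩
    rw [LinearMap.map_smul, smul_eq_mul]
    field_simp
  have hkerrank : Module.finrank ℂ (LinearMap.ker φ) = R := by
    have h1 := LinearMap.finrank_range_add_finrank_ker φ
    rw [hrange] at h1
    simp only [finrank_top] at h1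
    rw [Module.finrank_self] at h1
    have h2 : Module.finrank ℂ (Fin (R+1) → ℂ) = R + 1 := by
      simp [Module.finrank_pi]
    omega
  set b : Module.Basis (Fin R) ℂ (LinearMap.ker φ) := Module.finBasisOfFinrankEq ℂ _ hkerrank with hb
  set N : Fin R → (Fin (R+1) → ℂ) := fun t => ((b t : LinearMap.ker φ) : Fin (R+1) → ℂ) with hN
  have hNker : ∀ t, N t ∈ LinearMap.ker φ := fun t => (b t).2
  set D : (Fin (R+1) → ℂ) → ℂ := fun y => Matrix.det (Matrix.of (Matrix.vecCons y N)) with hD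
  have hDrow : ∀ y, D y = ∑ j : Fin (R+1), (-1 : ℂ) ^ (j : ℕ) * y j *
      Matrix.det (Matrix.of fun t t' : Fin R => N t (j.succAbove t')) := fun y =>
    det_cons_row y N
  -- vanishing of the bordered determinant on the kernel
  have hvanish : ∀ x ∈ LinearMap.ker φ, D x = 0 := by
    intro x hx
    have hdep : ¬ LinearIndependent ℂ (Matrix.vecCons x N) := by
      intro hind
      have hmem : ∀ i : Fin (R+1), Matrix.vecCons x N i ∈ LinearMap.ker φ := by
        intro i
        refine Fin.cases ?_ ?_ i
        · exact hx
        · intro t; exact hNker t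
      set v' : Fin (R+1) → LinearMap.ker φ := fun i => ⟨Matrix.vecCons x N i, hmem i⟩ with hv'
      have hind' : LinearIndependent ℂ v' := by
        apply LinearIndependent.of_comp (LinearMap.ker φ).subtype
        exact hind
      have := hind'.fintype_card_le_finrank
      rw [hkerrank, Fintype.card_fin] at this
      omega
    exact AlternatingMap.map_linearDependent _ _ hdep
  set μ : ℂ := D x0 / φ x0 with hμ
  have hprop : ∀ x, D x = μ * φ x := by
    intro x
    have hker : x - (φ x / φ x0) • x0 ∈ LinearMap.ker φ := by
      rw [LinearMap.mem_ker, map_sub, LinearMap.map_smul, smul_eq_mul]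
      field_simp
      simp
    have h0 := hvanish _ hker
    rw [hDrow] at h0
    have hsplit : ∑ j : Fin (R+1), (-1:ℂ) ^ (j:ℕ) * (x - (φ x / φ x0) • x0) j *
        Matrix.det (Matrix.of fun t t' : Fin R => N t (j.succAbove t'))
        = D x - (φ x / φ x0) * D x0 := by
      rw [hDrow x, hDrow x0, Finset.mul_sum, ← Finset.sum_sub_distrib]
      apply Finset.sum_congr rfl
      intro j _
      simp only [Pi.sub_apply, Pi.smul_apply, smul_eq_mul]
      ring
    rw [hsplit] at h0
    have := sub_eq_zero.mp h0
    rw [this, hμ]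
    field_simp
  -- μ is nonzero
  have hDx0 : D x0 ≠ 0 := by
    intro hD0
    obtain ⟨v, hv, hvm⟩ := Matrix.exists_vecMul_eq_zero_iff.mpr hD0
    have hind : LinearIndependent ℂ (Matrix.vecCons x0 N) := by
      rw [show Matrix.vecCons x0 N = Fin.cons x0 N from rfl, linearIndependent_fin_cons]
      constructor
      · have hbi := b.linearIndependent
        have := hbi.map' (LinearMap.ker φ).subtype (Submodule.ker_subtype _)
        exact this
      · intro hmem
        have hsub : Submodule.span ℂ (Set.range N) ≤ LinearMap.ker φ := by
          rw [Submodule.span_le]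
          rintro y ⟨t, rfl⟩
          exact hNker t
        exact hφne (hsub hmem)
    rw [Fintype.linearIndependent_iff] at hind
    have hvz := hind v ?_
    · exact hv (funext hvz)
    · funext j
      have := congrFun hvm j
      simpa [Matrix.vecMul, dotProduct] using this
  have hμne : μ ≠ 0 := by
    rw [hμ]
    exact div_ne_zero hDx0 hφne
  -- the minors of N are μ • c
  have hminors : ∀ m : Fin (R+1),
      Matrix.det (Matrix.of fun t t' : Fin R => N t (m.succAbove t')) = μ * c m := by
    intro m
    have h1 := hprop (Pi.single m 1)
    rw [hDrow, Finset.sum_eq_single m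
      (by intro j _ hj; simp [Pi.single_apply, hj]) (by simp), hφsing] at h1
    simp only [Pi.single_apply, if_pos rfl, if_true, eq_self_iff_true, mul_one] at h1
    have hpow : ((-1 : ℂ) ^ (m : ℕ)) ≠ 0 := by apply pow_ne_zero; norm_num
    apply mul_left_cancel₀ hpow
    linear_combination h1
  -- rescale the first row
  set t0 : Fin R := ⟨0, hR⟩ with ht0
  refine ⟨Function.update N t0 (μ⁻¹ • N t0), ?_⟩
  intro m
  have hmat : (Matrix.of fun t t' : Fin R => (Function.update N t0 (μ⁻¹ • N t0)) t
      (m.succAbove t'))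
      = Matrix.updateRow (Matrix.of fun t t' : Fin R => N t (m.succAbove t')) t0
        (μ⁻¹ • fun t' : Fin R => N t0 (m.succAbove t')) := by
    apply Matrix.ext
    intro t t'
    by_cases ht : t = t0
    · subst ht
      simp [Function.update_self, Matrix.updateRow_self]
    · simp [Function.update_of_ne ht, Matrix.updateRow_ne ht]
  rw [hmat, Matrix.det_updateRow_smul]
  have : Matrix.updateRow (Matrix.of fun t t' : Fin R => N t (m.succAbove t')) t0
      (fun t' : Fin R => N t0 (m.succAbove t'))
      = (Matrix.of fun t t' : Fin R => N t (m.succAbove t')) := by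
    apply Matrix.ext
    intro t t'
    by_cases ht : t = t0
    · subst ht; simp [Matrix.updateRow_self]
    · simp [Matrix.updateRow_ne ht]
  rw [this, hminors m]
  field_simp

end Minors

lemma dX_iter_smul (j : ℕ) (c : ℂ) (f : Ff) : dX^[j] (c • f) = c • dX^[j] f := by
  obtain ⟨L, hL⟩ := dX_iter_linear j
  rw [hL, hL, LinearMap.map_smul]

lemma det_zero_of_smul_row {k : ℕ} (A : Matrix (Fin k) (Fin k) Ff) (p q : Fin k)
    (hpq : p ≠ q) (c : ℂ) (h : A p = c • A q) : A.det = 0 := by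
  have hA : A = Matrix.updateRow A p ((algebraMap ℂ Ff c) • A q) := by
    rw [algebraMap_smul, ← h, Matrix.updateRow_eq_self]
  rw [hA, Matrix.det_updateRow_smul]
  have : Matrix.updateRow A p (A q) p = Matrix.updateRow A p (A q) q := by
    rw [Matrix.updateRow_self, Matrix.updateRow_ne (Ne.symm hpq)]
  rw [Matrix.det_zero_of_row_eq hpq this, mul_zero]

lemma Wr_sq {k : ℕ} (C : Fin k → Fin k → ℂ) (r : Fin k → Ff) :
    Wr (fun t => ∑ m, C t m • r m) =
      algebraMap ℂ Ff (Matrix.det (Matrix.of C)) * Wr r := by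
  unfold Wr
  have hmat : (Matrix.of fun i j : Fin k => dX^[(j:ℕ)] ((fun t => ∑ m, C t m • r m) i))
      = ((Matrix.of C).map (algebraMap ℂ Ff)) * (Matrix.of fun i j : Fin k => dX^[(j:ℕ)] (r i)) := by
    apply Matrix.ext
    intro i j
    obtain ⟨L, hL⟩ := dX_iter_linear (j : ℕ)
    simp only [Matrix.of_apply, Matrix.mul_apply, Matrix.map_apply]
    rw [hL]
    rw [map_sum]
    apply Finset.sum_congr rfl
    intro m _
    rw [LinearMap.map_smul, ← hL, Algebra.smul_def]
  rw [hmat, Matrix.det_mul]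
  congr 1
  rw [RingHom.map_det]
  rfl

lemma negX_ne_zero {f : Ff} (hf : f ≠ 0) : negX f ≠ 0 := by
  have hcomp : ∀ p : Polynomial ℂ, p ≠ 0 → p.comp (C Complex.I * X) ≠ 0 := by
    intro p hp hcz
    apply hp
    have h2 : (C Complex.I * X).comp (C (-Complex.I) * X) = X := by
      simp only [mul_comp, C_comp, X_comp]
      rw [← mul_assoc, ← C_mul, mul_neg, Complex.I_mul_I, neg_neg, map_one, one_mul]
    have := congrArg (fun q => q.comp (C (-Complex.I) * X)) hcz
    simp only [zero_comp] at this
    rw [comp_assoc, h2, comp_X] at this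
    exact this
  unfold negX
  apply div_ne_zero
  · exact aM_ne_zero (hcomp _ (RatFunc.num_ne_zero hf))
  · exact aM_ne_zero (hcomp _ f.denom_ne_zero)

lemma quad_sub_ne_zero (z : ℂ) : (X ^ 2 - C z : Polynomial ℂ) ≠ 0 := by
  intro h
  have := congrArg (fun q : Polynomial ℂ => q.coeff 2) h
  simp [Polynomial.coeff_X_pow, Polynomial.coeff_C] at this

lemma quad_add_ne_zero (z : ℂ) : (X ^ 2 + C z : Polynomial ℂ) ≠ 0 := by
  intro h
  have := congrArg (fun q : Polynomial ℂ => q.coeff 2) h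
  simp [Polynomial.coeff_X_pow, Polynomial.coeff_C] at this

lemma T_ne_zero (S : TypeASetting) (i : ℕ) : S.T i ≠ 0 := by
  unfold TypeASetting.T
  split
  · apply mul_ne_zero
    · exact zpow_ne_zero _ RatFunc.X_ne_zero
    · rw [Finset.prod_ne_zero_iff]
      intro s _
      apply aM_ne_zero
      exact mul_ne_zero (pow_ne_zero _ (quad_sub_ne_zero _)) (pow_ne_zero _ (quad_add_ne_zero _))
  · exact one_ne_zero

lemma Tprod_ne_zero (S : TypeASetting) (k : ℕ) :
    (∏ j ∈ Finset.range (k-1), S.T j ^ (k-1-j)) ≠ 0 := by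
  rw [Finset.prod_ne_zero_iff]
  exact fun j _ => pow_ne_zero _ (T_ne_zero S j)

lemma WrD_def (S : TypeASetting) {k : ℕ} (u : Fin k → Ff) :
    S.WrD u = Wr u / ∏ j ∈ Finset.range (k-1), S.T j ^ (k-1-j) := rfl

end Helpers

/-- Lemma 6.27: for cyclotomically self-dual K with canonical bilinear form
B, a basis (r_k) of K is a Witt basis iff B(r_i, r_j) = 0 whenever i + j ≠ R + 2
(paper's 1-based indexing; here (i:ℕ) + (j:ℕ) ≠ R in 0-based indexing). -/
theorem statement6 (S : TypeASetting) (K : Submodule ℂ Ff)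
    (hdec : Decomposable K) (hfr : S.HasFrame K)
    (hsd : S.SelfDual K) (B : Ff → Ff → ℂ) (hB : S.IsB K B)
    (r : Fin (S.R+1) → Ff)
    (hmem : ∀ k, r k ∈ K) (hind : LinearIndependent ℂ r)
    (hspan : Submodule.span ℂ (Set.range r) = K) :
    (∀ k : Fin (S.R+1), ∃ c : ℂ, c ≠ 0 ∧
        S.WrD (omitTuple r k) = algebraMap ℂ Ff c * negX (r (Fin.rev k))) ↔
    (∀ i j : Fin (S.R+1), (i : ℕ) + (j : ℕ) ≠ S.R → B (r i) (r j) = 0) := by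
  classical
  obtain ⟨hQP, hbas, hreg, h0fr⟩ := hfr
  -- coefficient expansions in the basis r
  have hcoef : ∀ f ∈ K, ∃ cc : Fin (S.R+1) → ℂ, ∑ m, cc m • r m = f := by
    intro f hf
    exact (Submodule.mem_span_range_iff_exists_fun ℂ).mp (by rw [hspan]; exact hf)
  -- the full divided Wronskian is nonzero
  have hW : S.WrD r ≠ 0 := by
    obtain ⟨v, hv, hev⟩ := (h0fr (S.R+1) (by omega) (le_refl _)).2
    have hvne : S.WrD v ≠ 0 := by
      intro h
      rw [h] at hev
      exact hev (RatFunc.eval_zero _ _)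
    choose Cm hCm using (fun t => hcoef (v t) (hv t))
    have hveq : v = fun t => ∑ m, Cm t m • r m := funext fun t => (hCm t).symm
    have hWrv : Wr v = algebraMap ℂ Ff (Matrix.det (Matrix.of Cm)) * Wr r := by
      rw [hveq]; exact Wr_sq Cm r
    have hWrr : Wr r ≠ 0 := by
      intro h0
      apply hvne
      rw [WrD_def, hWrv, h0, mul_zero, zero_div]
    rw [WrD_def]
    exact div_ne_zero hWrr (Tprod_ne_zero S _)
  set g : Fin (S.R+1) → Ff := fun m => S.WrD (omitTuple r m) with hg
  have homit : ∀ m : Fin (S.R+1), omitTuple r m = fun t => r (m.succAbove t) := fun m => rfl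
  -- expansion of divided Wronskians of tuples from K
  have hexp : ∀ (Mm : Fin S.R → Fin (S.R+1) → ℂ),
      S.WrD (fun t => ∑ m, Mm t m • r m) =
        ∑ m, (Matrix.det (Matrix.of fun t t' : Fin S.R => Mm t (m.succAbove t'))) • g m := by
    intro Mm
    rw [WrD_def]
    rw [show Wr (fun t => ∑ m, Mm t m • r m) = WA S.R (fun t => ∑ m, Mm t m • r m) from
      Wr_eq_WA _]
    rw [cauchyBinet (WA S.R) r Mm]
    rw [Finset.sum_div]
    apply Finset.sum_congr rfl
    intro m _
    rw [smul_div_assoc]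
    congr 1
    show (WA S.R fun t => r (m.succAbove t)) / (∏ j ∈ Finset.range (S.R - 1),
      S.T j ^ (S.R - 1 - j)) = S.WrD (omitTuple r m)
    rw [WrD_def, homit m]
    congr 1
    exact (Wr_eq_WA _).symm
  -- K† is contained in the span of the g's
  have hKdag : S.Kdag K ≤ Submodule.span ℂ (Set.range g) := by
    apply Submodule.span_le.mpr
    rintro f ⟨v, hvK, rfl⟩
    choose Cm hCm using (fun t => hcoef (v t) (hvK t))
    have hveq : v = fun t => ∑ m, Cm t m • r m := funext fun t => (hCm t).symm
    rw [hveq, hexp Cm]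
    apply Submodule.sum_mem
    intro m _
    exact Submodule.smul_mem _ _ (Submodule.subset_span ⟨m, rfl⟩)
  constructor
  · -- forward direction
    intro hw i j hij
    set k : Fin (S.R+1) := Fin.rev j with hk
    have hjk : r (Fin.rev k) = r j := by rw [hk, Fin.rev_rev]
    obtain ⟨c, hc, heq⟩ := hw k
    set t0 : Fin S.R := ⟨0, S.hR1⟩ with ht0
    set w : Fin S.R → Ff :=
      Function.update (omitTuple r k) t0 (c⁻¹ • omitTuple r k t0) with hwdef
    have hwent : ∀ t, w t = if t = t0 then c⁻¹ • r (k.succAbove t) else r (k.succAbove t) := by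
      intro t
      by_cases h : t = t0
      · subst h
        rw [hwdef, Function.update_self, if_pos rfl]
        rfl
      · rw [hwdef, Function.update_of_ne h, if_neg h]
        rfl
    have hwK : ∀ t, w t ∈ K := by
      intro t
      rw [hwent]
      by_cases h : t = t0
      · rw [if_pos h]; exact Submodule.smul_mem _ _ (hmem _)
      · rw [if_neg h]; exact hmem _
    have hWrw : Wr w = c⁻¹ • Wr (omitTuple r k) := by
      unfold Wr
      have hmat : (Matrix.of fun t b : Fin S.R => dX^[(b:ℕ)] (w t))
          = Matrix.updateRow (Matrix.of fun t b : Fin S.R => dX^[(b:ℕ)] (omitTuple r k t)) t0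
            ((algebraMap ℂ Ff c⁻¹) •
              (Matrix.of fun t b : Fin S.R => dX^[(b:ℕ)] (omitTuple r k t)) t0) := by
        apply Matrix.ext
        intro t b
        by_cases h : t = t0
        · subst h
          rw [Matrix.updateRow_self]
          simp only [Matrix.of_apply, Pi.smul_apply]
          rw [hwent, if_pos rfl, dX_iter_smul, algebraMap_smul]
          rfl
        · rw [Matrix.updateRow_ne h]
          simp only [Matrix.of_apply]
          rw [hwent, if_neg h]
          rfl
      rw [hmat, Matrix.det_updateRow_smul, Matrix.updateRow_eq_self, Algebra.smul_def]
    have hwrd : S.WrD w = negX (r j) := by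
      rw [WrD_def, hWrw, smul_div_assoc, ← WrD_def, heq, hjk]
      rw [Algebra.smul_def, ← mul_assoc, ← map_mul, inv_mul_cancel₀ hc, map_one, one_mul]
    have hpin := hB (r i) (r j) (hmem i) (hmem j) w hwK hwrd.symm
    have hik : i ≠ k := by
      intro h
      apply hij
      have h1 : (k : ℕ) = S.R - (j : ℕ) := by rw [hk, Fin.val_rev]; omega
      have h2 : (j : ℕ) ≤ S.R := by omega
      rw [h, h1]
      omega
    obtain ⟨t, ht⟩ := Fin.exists_succAbove_eq hik
    have hzero : S.WrD (Fin.cons (r i) w) = 0 := by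
      rw [WrD_def]
      have hWr0 : Wr (Fin.cons (r i) w) = 0 := by
        unfold Wr
        apply det_zero_of_smul_row _ (Fin.succ t) 0 (Fin.succ_ne_zero t)
          (if t = t0 then c⁻¹ else 1)
        funext b
        simp only [Matrix.of_apply, Fin.cons_succ, Fin.cons_zero, Pi.smul_apply]
        rw [hwent, ht]
        by_cases h : t = t0
        · rw [if_pos h, if_pos h, dX_iter_smul]
        · rw [if_neg h, if_neg h, one_smul]
      rw [hWr0, zero_div]
    rw [hzero] at hpin
    have := (algebraMap ℂ Ff).injective (by rw [map_zero]; exact hpin :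
      algebraMap ℂ Ff (B (r i) (r j)) = algebraMap ℂ Ff 0)
    exact this
  · -- backward direction
    intro hB0 k
    set j : Fin (S.R+1) := Fin.rev k with hj
    have hrj : r j ≠ 0 := hind.ne_zero j
    have hjK : negX (r j) ∈ S.Kdag K := (hsd (r j) (hQP _ (hmem j))).mp (hmem j)
    obtain ⟨a, ha⟩ := (Submodule.mem_span_range_iff_exists_fun ℂ).mp (hKdag hjK)
    have hane : a ≠ 0 := by
      intro h0
      apply negX_ne_zero hrj
      rw [← ha, h0]
      simp
    obtain ⟨Mm, hMm⟩ := exists_minor_matrix S.hR1 a hane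
    set w : Fin S.R → Ff := fun t => ∑ m, Mm t m • r m with hwdef
    have hwK : ∀ t, w t ∈ K :=
      fun t => Submodule.sum_mem _ fun m _ => Submodule.smul_mem _ _ (hmem m)
    have hwrd : S.WrD w = negX (r j) := by
      rw [hwdef, hexp Mm, ← ha]
      apply Finset.sum_congr rfl
      intro m _
      rw [hMm m]
    -- pinned values of B
    have hpin : ∀ i : Fin (S.R+1),
        algebraMap ℂ Ff (B (r i) (r j)) = algebraMap ℂ Ff ((-1 : ℂ) ^ (i : ℕ) * a i) *
          S.WrD r := by
      intro i
      rw [hB (r i) (r j) (hmem i) (hmem j) w hwK hwrd.symm]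
      have hcons : Fin.cons (r i) w =
          fun t : Fin (S.R+1) =>
            ∑ m, (Matrix.vecCons (fun m => if m = i then (1:ℂ) else 0) Mm t m) • r m := by
        funext t
        refine Fin.cases ?_ ?_ t
        · rw [Fin.cons_zero]
          rw [Finset.sum_eq_single i (by intro b _ hb; simp [hb]) (by simp)]
          simp
        · intro s
          rw [Fin.cons_succ]
          rfl
      rw [hcons, WrD_def, Wr_sq, WrD_def, ← mul_div_assoc]
      congr 2
      rw [show (Matrix.of (Matrix.vecCons (fun m => if m = i then (1:ℂ) else 0) Mm)).det
          = ∑ j' : Fin (S.R+1), (-1 : ℂ) ^ (j' : ℕ) * (if j' = i then (1:ℂ) else 0) *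
            Matrix.det (Matrix.of fun t t' : Fin S.R => Mm t (j'.succAbove t')) from
        det_cons_row _ Mm]
      rw [Finset.sum_eq_single i (by intro b _ hb; simp [hb]) (by simp)]
      rw [hMm i]
      simp
    -- off-diagonal coefficients vanish
    have hvan : ∀ i : Fin (S.R+1), i ≠ k → a i = 0 := by
      intro i hik
      have harith : (i : ℕ) + (j : ℕ) ≠ S.R := by
        have h1 : (j : ℕ) = S.R - (k : ℕ) := by
          rw [hj, Fin.val_rev]
          omega
        have h2 : (i : ℕ) ≠ (k : ℕ) := fun h => hik (Fin.val_injective h)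
        have h3 : (k : ℕ) ≤ S.R := by omega
        omega
      have hB0' := hB0 i j harith
      have := hpin i
      rw [hB0', map_zero] at this
      rcases mul_eq_zero.mp this.symm with h | h
      · have := (algebraMap ℂ Ff).injective (by rw [h, map_zero] :
          algebraMap ℂ Ff ((-1 : ℂ) ^ (i : ℕ) * a i) = algebraMap ℂ Ff 0)
        rcases mul_eq_zero.mp this with h' | h'
        · exact absurd h' (pow_ne_zero _ (by norm_num))
        · exact h'
      · exact absurd h hW
    have hak : negX (r j) = a k • g k := by
      rw [← ha, Finset.sum_eq_single k (fun b _ hb => by rw [hvan b hb, zero_smul])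
        (by simp)]
    have hakne : a k ≠ 0 := by
      intro h0
      apply negX_ne_zero hrj
      rw [hak, h0, zero_smul]
    refine ⟨(a k)⁻¹, inv_ne_zero hakne, ?_⟩
    have : g k = (a k)⁻¹ • negX (r j) := by
      rw [hak, smul_smul, inv_mul_cancel₀ hakne, one_smul]
    rw [show S.WrD (omitTuple r k) = g k from rfl, this, Algebra.smul_def]
end
end

section
/- Assume every t_j is nonzero. Then (t, c) is a cyclotomic point if and only if for every j ∈ I there exists a nonzero constant λ_j ∈ ℂ with y_{σ(j)}(ωx) = λ_j · y_j(x) as polynomials. Moreover, since each y_i is monic, in that case necessarily λ_j = ω^{deg y_j}; that is, (t, c) is a cyclotomic point if and only if y_{σ(j)}(ωx) = ω^{deg y_j} · y_j(x) for all j ∈ I. -/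
open Polynomial

noncomputable section

private lemma idx_lt {m M i k : ℕ} (hi : i < m) (hk : k < M) : i + m * k < M * m := by
  have h1 : i + m * k + 1 ≤ m + m * k := by omega
  have h2 : m + m * k = m * (k + 1) := by ring
  have h3 : m * (k + 1) ≤ m * M := Nat.mul_le_mul_left m hk
  have h4 : m * M = M * m := Nat.mul_comm m M
  omega

private lemma idx_lt' {m M i : ℕ} (hi : i < m) (hM : 1 ≤ M) : i < M * m := by
  have h3 : m * 1 ≤ m * M := Nat.mul_le_mul_left m hM
  have h4 : m * M = M * m := Nat.mul_comm m M
  omega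

/-- The monic polynomial y_i(x) = ∏_{j : c(j) = i} (x − t_j). -/
def yPoly {I : Type} [DecidableEq I] {m' : ℕ} (t : Fin m' → ℂ) (c : Fin m' → I) (i : I) :
    Polynomial ℂ :=
  ∏ j ∈ Finset.univ.filter (fun j => c j = i), (X - C (t j))

/-- The pair (t, c) is a cyclotomic point: m' = M·m and, after a permutation,
t_{i+mk} = ω^k t_i and c(i+mk) = σ^k(c(i)). -/
def IsCycPoint {I : Type} (σ : Equiv.Perm I) (M : ℕ) (ω : ℂ) {m' : ℕ}
    (t : Fin m' → ℂ) (c : Fin m' → I) : Prop :=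
  ∃ m : ℕ, ∃ hm : m' = M * m, ∃ ρ : Equiv.Perm (Fin m'),
    ∀ i : ℕ, ∀ hi : i < m, ∀ k : ℕ, ∀ hk : k < M,
      t (ρ ⟨i + m * k, by rw [hm]; exact idx_lt hi hk⟩) =
          ω ^ k * t (ρ ⟨i, by rw [hm]; exact idx_lt' hi (by omega)⟩) ∧
      c (ρ ⟨i + m * k, by rw [hm]; exact idx_lt hi hk⟩) =
          (σ ^ k) (c (ρ ⟨i, by rw [hm]; exact idx_lt' hi (by omega)⟩))


-- ===================== auxiliary lemmas =====================

private lemma pow_mod_eq' {G : Type*} [Monoid G] {M : ℕ} (u : G) (hu : u ^ M = 1) (a : ℕ) :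
    u ^ (a % M) = u ^ a := by
  conv_rhs => rw [← Nat.div_add_mod a M]
  rw [pow_add, pow_mul, hu, one_pow, one_mul]

private lemma chunk_eq {m i i' k k' : ℕ} (hi : i < m) (hi' : i' < m)
    (h : i + m * k = i' + m * k') : i = i' ∧ k = k' := by
  have e1 : (i + m * k) % m = i := by
    rw [Nat.add_mul_mod_self_left, Nat.mod_eq_of_lt hi]
  have e2 : (i' + m * k') % m = i' := by
    rw [Nat.add_mul_mod_self_left, Nat.mod_eq_of_lt hi']
  have hii : i = i' := by rw [← e1, ← e2, h]
  refine ⟨hii, ?_⟩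
  have : m * k = m * k' := by omega
  exact Nat.eq_of_mul_eq_mul_left (by omega) this

private lemma exists_injOn_of_map_eq {α β : Type*} [DecidableEq α] :
    ∀ (s s' : Finset α) (f g : α → β), s.val.map f = s'.val.map g →
    ∃ φ : α → α, Set.MapsTo φ ↑s ↑s' ∧ Set.InjOn φ ↑s ∧ ∀ a ∈ s, g (φ a) = f a := by
  intro s
  induction s using Finset.induction_on with
  | empty =>
    intro s' f g h
    have : s' = ∅ := by
      rw [← Finset.val_eq_zero]
      have := congrArg Multiset.card h
      simpa using this.symm
    subst this
    exact ⟨id, by simp, by simp, by simp⟩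
  | @insert a s ha ih =>
    intro s' f g h
    have hins : (insert a s).val = a ::ₘ s.val := by
      simp [Finset.insert_val, Multiset.ndinsert_of_notMem ha]
    have hmem : f a ∈ s'.val.map g := by
      rw [← h, hins]; simp
    obtain ⟨b, hb, hgb⟩ := Multiset.mem_map.mp hmem
    have hbs' : b ∈ s' := hb
    have hs'val : s'.val = b ::ₘ (s'.erase b).val := by
      rw [Finset.erase_val]; exact (Multiset.cons_erase hb).symm
    have h2 : s.val.map f = (s'.erase b).val.map g := by
      have key : f a ::ₘ s.val.map f = f a ::ₘ (s'.erase b).val.map g := by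
        rw [← Multiset.map_cons, ← hins, h, hs'val, Multiset.map_cons, hgb]
      exact (Multiset.cons_inj_right _).mp key
    obtain ⟨φ', hmap', hinj', hval'⟩ := ih (s'.erase b) f g h2
    refine ⟨Function.update φ' a b, ?_, ?_, ?_⟩
    · intro x hx
      simp only [Finset.coe_insert, Set.mem_insert_iff] at hx
      rcases hx with rfl | hx
      · simpa [Function.update_self] using hbs'
      · have hxa : x ≠ a := by rintro rfl; exact ha hx
        simp only [Function.update_of_ne hxa]
        exact Finset.mem_coe.mpr (Finset.mem_of_mem_erase (hmap' hx))
    · intro x hx y hy hxy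
      simp only [Finset.coe_insert, Set.mem_insert_iff] at hx hy
      rcases hx with rfl | hx <;> rcases hy with rfl | hy
      · rfl
      · exfalso
        have hya : y ≠ x := by rintro rfl; exact ha hy
        rw [Function.update_self, Function.update_of_ne hya] at hxy
        exact (Finset.ne_of_mem_erase (hmap' hy)) hxy.symm
      · exfalso
        have hxa : x ≠ y := by rintro rfl; exact ha hx
        rw [Function.update_self, Function.update_of_ne hxa] at hxy
        exact (Finset.ne_of_mem_erase (hmap' hx)) hxy
      · have hxa : x ≠ a := by rintro rfl; exact ha hx
        have hya : y ≠ a := by rintro rfl; exact ha hy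
        rw [Function.update_of_ne hxa, Function.update_of_ne hya] at hxy
        exact hinj' hx hy hxy
    · intro x hx
      rcases Finset.mem_insert.mp hx with rfl | hx2
      · rw [Function.update_self, hgb]
      · have hxa : x ≠ a := by rintro rfl; exact ha hx2
        rw [Function.update_of_ne hxa]
        exact hval' x hx2

private lemma key_induction {I : Type} [DecidableEq I]
    (σ : Equiv.Perm I) (M : ℕ) (hM : 1 ≤ M) (hσM : σ ^ M = 1)
    (ω : ℂ) (hω : IsPrimitiveRoot ω M) :
    ∀ n (t : Fin n → ℂ) (c : Fin n → I), (∀ j, t j ≠ 0) →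
    (∃ ψ : Fin n → Fin n, Function.Injective ψ ∧
      ∀ l, t (ψ l) = ω * t l ∧ c (ψ l) = σ (c l)) →
    ∃ m, n = M * m ∧ ((0:ℕ) < n → ∃ ρ : ℕ → Fin n,
      (∀ x y, x < n → y < n → ρ x = ρ y → x = y) ∧
      ∀ i, i < m → ∀ k, k < M →
        t (ρ (i + m * k)) = ω ^ k * t (ρ i) ∧
        c (ρ (i + m * k)) = (σ ^ k) (c (ρ i))) := by
  intro n
  induction n using Nat.strong_induction_on with
  | _ n ih =>
  intro t c ht0 hex
  obtain ⟨ψ, hψinj, hψ⟩ := hex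
  rcases Nat.eq_zero_or_pos n with rfl | hn
  · exact ⟨0, by omega, fun h => absurd h (by omega : ¬ (0:ℕ) < 0)⟩
  set ψp : Equiv.Perm (Fin n) := Equiv.ofBijective ψ (Finite.injective_iff_bijective.mp hψinj)
    with hψpdef
  have hψp_apply : ∀ x, ψp x = ψ x := fun x => rfl
  have hiter : ∀ (k : ℕ) (x : Fin n),
      t ((ψp ^ k) x) = ω ^ k * t x ∧ c ((ψp ^ k) x) = (σ ^ k) (c x) := by
    intro k
    induction k with
    | zero => intro x; simp
    | succ k ihk =>
      intro x
      have h1 : (ψp ^ (k+1)) x = (ψp ^ k) (ψp x) := by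
        rw [pow_succ, Equiv.Perm.mul_apply]
      obtain ⟨e1, e2⟩ := ihk (ψp x)
      constructor
      · rw [h1, e1, hψp_apply, (hψ x).1, pow_succ]; ring
      · rw [h1, e2, hψp_apply, (hψ x).2, pow_succ, Equiv.Perm.mul_apply]
  set l₀ : Fin n := ⟨0, hn⟩ with hl₀
  have hchain_inj : ∀ a b, a < M → b < M → (ψp ^ a) l₀ = (ψp ^ b) l₀ → a = b := by
    intro a b ha hb h
    apply hω.pow_inj ha hb
    have h2 := congrArg t h
    rw [(hiter a l₀).1, (hiter b l₀).1] at h2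
    exact mul_right_cancel₀ (ht0 l₀) h2
  have hsucc : ∀ (a : ℕ) (x : Fin n), ψp ((ψp ^ a) x) = (ψp ^ (a+1)) x := by
    intro a x; rw [pow_succ', Equiv.Perm.mul_apply]
  set Ch : Finset (Fin n) := (Finset.range M).image (fun k => (ψp ^ k) l₀) with hCh
  have hmemC : ∀ x : Fin n, x ∈ Ch ↔ ∃ k, k < M ∧ (ψp ^ k) l₀ = x := by
    intro x
    simp [hCh, Finset.mem_image, Finset.mem_range]
  have hCcard : Ch.card = M := by
    rw [hCh, Finset.card_image_of_injOn, Finset.card_range]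
    intro a ha b hb hab
    exact hchain_inj a b (Finset.mem_range.mp ha) (Finset.mem_range.mp hb) hab
  have hMn : M ≤ n := by
    have h1 := Finset.card_le_univ Ch
    rw [hCcard] at h1
    simpa using h1
  have hRcard : Chᶜ.card = n - M := by
    rw [Finset.card_compl, hCcard, Fintype.card_fin]
  set f : Fin (n - M) ≃ {x // x ∈ Chᶜ} := (Finset.equivFinOfCardEq hRcard).symm with hf
  have hfC : ∀ l : Fin (n-M), (↑(f l) : Fin n) ∉ Ch :=
    fun l => Finset.mem_compl.mp (f l).2
  have hψpM_fix : ∀ (l : Fin (n-M)), ψp ↑(f l) = l₀ → (ψp ^ M) l₀ ∉ Ch := by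
    intro l hl hc
    obtain ⟨k, hk, hkeq⟩ := (hmemC _).mp hc
    have hk0 : k = 0 := by
      apply hω.pow_inj hk (by omega)
      have h2 := congrArg t hkeq
      rw [(hiter k l₀).1, (hiter M l₀).1, hω.pow_eq_one] at h2
      have h3 : ω ^ k * t l₀ = ω ^ 0 * t l₀ := by
        rw [pow_zero]; exact h2
      exact mul_right_cancel₀ (ht0 l₀) h3
    subst hk0
    simp only [pow_zero, Equiv.Perm.one_apply] at hkeq
    -- hkeq : l₀ = (ψp ^ M) l₀
    have hM1 : M - 1 + 1 = M := by omega
    have h4 : ψp ((ψp ^ (M-1)) l₀) = (ψp ^ M) l₀ := by rw [hsucc, hM1]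
    have h5 : ψp ↑(f l) = ψp ((ψp ^ (M-1)) l₀) := by rw [h4, ← hkeq, hl]
    have h6 := ψp.injective h5
    apply hfC l
    rw [h6, hmemC]
    exact ⟨M - 1, by omega, rfl⟩
  have hnxt : ∀ l : Fin (n - M),
      (if ψp ↑(f l) = l₀ then (ψp ^ M) l₀ else ψp ↑(f l)) ∈ Chᶜ := by
    intro l
    rw [Finset.mem_compl]
    split_ifs with h
    · exact hψpM_fix l h
    · intro hc
      obtain ⟨k, hk, hkeq⟩ := (hmemC _).mp hc
      rcases Nat.eq_zero_or_pos k with rfl | hkpos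
      · simp only [pow_zero, Equiv.Perm.one_apply] at hkeq
        exact h hkeq.symm
      · have hk1 : k - 1 + 1 = k := by omega
        have h4 : ψp ((ψp ^ (k-1)) l₀) = (ψp ^ k) l₀ := by rw [hsucc, hk1]
        have h5 : ψp ((ψp ^ (k-1)) l₀) = ψp ↑(f l) := by rw [h4, hkeq]
        have h6 := ψp.injective h5
        apply hfC l
        rw [← h6, hmemC]
        exact ⟨k - 1, by omega, rfl⟩
  set ψ' : Fin (n-M) → Fin (n-M) := fun l => f.symm ⟨_, hnxt l⟩ with hψ'
  have hψ'val : ∀ l, (↑(f (ψ' l)) : Fin n)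
      = if ψp ↑(f l) = l₀ then (ψp ^ M) l₀ else ψp ↑(f l) := by
    intro l; rw [hψ', Equiv.apply_symm_apply]
  have ht'c' : ∀ l, t ↑(f (ψ' l)) = ω * t ↑(f l) ∧ c ↑(f (ψ' l)) = σ (c ↑(f l)) := by
    intro l
    rw [hψ'val l]
    split_ifs with h
    · constructor
      · rw [(hiter M l₀).1, hω.pow_eq_one, one_mul, ← h, hψp_apply, (hψ _).1]
      · rw [(hiter M l₀).2, hσM, Equiv.Perm.one_apply, ← h, hψp_apply, (hψ _).2]
    · rw [hψp_apply]
      exact hψ _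
  have hψ'inj : Function.Injective ψ' := by
    intro l₁ l₂ h12
    have hfinj : ∀ a b : Fin (n-M), (↑(f a) : Fin n) = ↑(f b) → a = b := by
      intro a b hab; exact f.injective (Subtype.ext hab)
    have hv : (↑(f (ψ' l₁)) : Fin n) = ↑(f (ψ' l₂)) := by rw [h12]
    rw [hψ'val, hψ'val] at hv
    have hMfix : ∀ lx : Fin (n - M), (ψp ^ M) l₀ = ψp ↑(f lx) → False := by
      intro lx hx
      have hM1 : M - 1 + 1 = M := by omega
      have h4 : ψp ((ψp ^ (M-1)) l₀) = (ψp ^ M) l₀ := by rw [hsucc, hM1]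
      have h5 : ψp ((ψp ^ (M-1)) l₀) = ψp ↑(f lx) := by rw [h4, hx]
      have h6 := ψp.injective h5
      apply hfC lx
      rw [← h6, hmemC]
      exact ⟨M - 1, by omega, rfl⟩
    split_ifs at hv with h1 h2 h2
    · exact hfinj _ _ (ψp.injective (h1.trans h2.symm))
    · exact absurd hv (fun hx => hMfix l₂ hx)
    · exact absurd hv.symm (fun hx => hMfix l₁ hx)
    · exact hfinj _ _ (ψp.injective hv)
  have hlt : n - M < n := by omega
  obtain ⟨m, hm, hrest⟩ := ih (n - M) hlt (fun l => t ↑(f l)) (fun l => c ↑(f l))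
      (fun l => ht0 _) ⟨ψ', hψ'inj, fun l => ht'c' l⟩
  have hn' : n = M * (m + 1) := by
    have : M * (m + 1) = M * m + M := by ring
    omega
  rcases Nat.eq_zero_or_pos m with rfl | hmpos
  · -- n = M : chain only
    refine ⟨1, by omega, fun _ => ⟨fun x => (ψp ^ x) l₀, ?_, ?_⟩⟩
    · intro x y hx hy hxy
      exact hchain_inj x y (by omega) (by omega) hxy
    · intro i hi k hk
      have hi0 : i = 0 := by omega
      subst hi0
      have h01 : 0 + 1 * k = k := by omega
      rw [h01]
      simpa using hiter k l₀
  · -- m > 0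
    have hnM_pos : 0 < n - M := by
      have h1 : M * 1 ≤ M * m := Nat.mul_le_mul_left M hmpos
      omega
    obtain ⟨ρ', hinj', hprop'⟩ := hrest hnM_pos
    set ρn : ℕ → Fin n := fun x =>
      if x % (m+1) < m then ↑(f (ρ' (x % (m+1) + m * (x / (m+1)))))
      else (ψp ^ (x / (m+1))) l₀ with hρn
    have hmod : ∀ i k : ℕ, i < m + 1 →
        (i + (m+1) * k) % (m+1) = i ∧ (i + (m+1) * k) / (m+1) = k := by
      intro i k hi
      constructor
      · rw [Nat.add_mul_mod_self_left, Nat.mod_eq_of_lt hi]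
      · rw [Nat.add_mul_div_left _ _ (by omega : 0 < m+1), Nat.div_eq_of_lt hi, Nat.zero_add]
    have hval : ∀ i k : ℕ, i < m + 1 → k < M →
        ρn (i + (m+1) * k) = if i < m then ↑(f (ρ' (i + m * k))) else (ψp ^ k) l₀ := by
      intro i k hi hk
      obtain ⟨e1, e2⟩ := hmod i k hi
      rw [hρn]
      simp only [e1, e2]
    have hval0 : ∀ i : ℕ, i < m + 1 →
        ρn i = if i < m then ↑(f (ρ' i)) else l₀ := by
      intro i hi
      have h0 : i = i + (m+1) * 0 := by omega
      rw [h0, hval i 0 hi (by omega)]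
      simp
    refine ⟨m + 1, hn', fun _ => ⟨ρn, ?_, ?_⟩⟩
    · -- injectivity on < n
      intro x y hx hy hxy
      have hxm : x % (m+1) < m + 1 := Nat.mod_lt _ (by omega)
      have hym : y % (m+1) < m + 1 := Nat.mod_lt _ (by omega)
      have hxd : x / (m+1) < M := by
        rw [Nat.div_lt_iff_lt_mul (by omega : 0 < m+1)]
        omega
      have hyd : y / (m+1) < M := by
        rw [Nat.div_lt_iff_lt_mul (by omega : 0 < m+1)]
        omega
      have hxe : x = x % (m+1) + (m+1) * (x / (m+1)) := (Nat.mod_add_div x (m+1)).symm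
      have hye : y = y % (m+1) + (m+1) * (y / (m+1)) := (Nat.mod_add_div y (m+1)).symm
      rw [hρn] at hxy
      simp only at hxy
      by_cases h1 : x % (m+1) < m <;> by_cases h2 : y % (m+1) < m
      · rw [if_pos h1, if_pos h2] at hxy
        have h3 : ρ' (x % (m+1) + m * (x / (m+1))) = ρ' (y % (m+1) + m * (y / (m+1))) :=
          f.injective (Subtype.ext hxy)
        have hb1 : x % (m+1) + m * (x / (m+1)) < n - M := by
          have := idx_lt h1 hxd; omega
        have hb2 : y % (m+1) + m * (y / (m+1)) < n - M := by
          have := idx_lt h2 hyd; omega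
        have h4 := hinj' _ _ hb1 hb2 h3
        obtain ⟨h5, h6⟩ := chunk_eq h1 h2 h4
        rw [hxe, hye, h5, h6]
      · rw [if_pos h1, if_neg h2] at hxy
        exact absurd ((hmemC _).mpr ⟨_, hyd, hxy.symm⟩) (hfC _)
      · rw [if_neg h1, if_pos h2] at hxy
        exact absurd ((hmemC _).mpr ⟨_, hxd, hxy⟩) (hfC _)
      · rw [if_neg h1, if_neg h2] at hxy
        have h3 := hchain_inj _ _ hxd hyd hxy
        have h5 : x % (m+1) = y % (m+1) := by omega
        rw [hxe, hye, h5, h3]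
    · -- properties
      intro i hi k hk
      rw [hval i k (by omega) hk, hval0 i (by omega)]
      by_cases him : i < m
      · rw [if_pos him, if_pos him]
        exact hprop' i him k hk
      · rw [if_neg him, if_neg him]
        constructor
        · rw [(hiter k l₀).1]
        · rw [(hiter k l₀).2]


section glue

variable {I : Type} [Fintype I] [DecidableEq I]

private lemma cyc_iff_shift (σ : Equiv.Perm I) (M : ℕ) (hM : 1 ≤ M) (hσM : σ ^ M = 1)
    (ω : ℂ) (hω : IsPrimitiveRoot ω M)
    {m' : ℕ} (t : Fin m' → ℂ) (c : Fin m' → I) (ht0 : ∀ j, t j ≠ 0) :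
    IsCycPoint σ M ω t c ↔
      ∃ ψ : Fin m' → Fin m', Function.Injective ψ ∧
        ∀ l, t (ψ l) = ω * t l ∧ c (ψ l) = σ (c l) := by
  constructor
  · rintro ⟨m, hm, ρ, hρ⟩
    rcases Nat.eq_zero_or_pos m' with h0 | hpos
    · subst h0
      exact ⟨id, fun a b h => h, fun l => absurd l.isLt (by omega)⟩
    · have hmpos : 0 < m := by
        rcases Nat.eq_zero_or_pos m with rfl | h
        · omega
        · exact h
      have hMpos : 0 < M := by omega
      have hkM : ∀ x : Fin m', (ρ.symm x).1 / m < M := by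
        intro x
        rw [Nat.div_lt_iff_lt_mul hmpos]
        have h1 := (ρ.symm x).isLt
        omega
      refine ⟨fun x => ρ ⟨(ρ.symm x).1 % m + m * (((ρ.symm x).1 / m + 1) % M),
          lt_of_lt_of_eq (idx_lt (Nat.mod_lt _ hmpos) (Nat.mod_lt _ hMpos)) hm.symm⟩, ?_, ?_⟩
      · intro a b hab
        simp only at hab
        have h1 := congrArg Fin.val (ρ.injective hab)
        simp only [] at h1
        obtain ⟨h2, h3⟩ := chunk_eq (Nat.mod_lt _ hmpos) (Nat.mod_lt _ hmpos) h1
        have hka := hkM a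
        have hkb := hkM b
        have h4 : (ρ.symm a).1 / m = (ρ.symm b).1 / m := by
          have hka2 := hkM a
          have hkb2 := hkM b
          set ka := (ρ.symm a).1 / m with hkadef
          set kb := (ρ.symm b).1 / m with hkbdef
          by_cases hc1 : ka + 1 = M <;> by_cases hc2 : kb + 1 = M
          · omega
          · exfalso
            have e1 : (ka + 1) % M = 0 := by rw [hc1, Nat.mod_self]
            have e2 : (kb + 1) % M = kb + 1 := Nat.mod_eq_of_lt (by omega)
            rw [e1, e2] at h3
            exact absurd h3.symm (Nat.succ_ne_zero kb)
          · exfalso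
            have e1 : (ka + 1) % M = ka + 1 := Nat.mod_eq_of_lt (by omega)
            have e2 : (kb + 1) % M = 0 := by rw [hc2, Nat.mod_self]
            rw [e1, e2] at h3
            exact absurd h3 (Nat.succ_ne_zero ka)
          · have e1 : (ka + 1) % M = ka + 1 := Nat.mod_eq_of_lt (by omega)
            have e2 : (kb + 1) % M = kb + 1 := Nat.mod_eq_of_lt (by omega)
            rw [e1, e2] at h3
            omega
        have h5 : (ρ.symm a).1 = (ρ.symm b).1 := by
          have ea : (ρ.symm a).1 % m + m * ((ρ.symm a).1 / m) = (ρ.symm a).1 :=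
            Nat.mod_add_div _ _
          have eb : (ρ.symm b).1 % m + m * ((ρ.symm b).1 / m) = (ρ.symm b).1 :=
            Nat.mod_add_div _ _
          rw [← ea, ← eb, h2, h4]
        have h6 : ρ.symm a = ρ.symm b := Fin.ext h5
        have := congrArg ρ h6
        rwa [ρ.apply_symm_apply, ρ.apply_symm_apply] at this
      · intro x
        simp only
        set i := (ρ.symm x).1 % m with hidef
        set k := (ρ.symm x).1 / m with hkdef
        have him : i < m := Nat.mod_lt _ hmpos
        have hkk : k < M := hkM x
        have hxeq : x = ρ ⟨i + m * k, lt_of_lt_of_eq (idx_lt him hkk) hm.symm⟩ := by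
          have h5 : i + m * k = (ρ.symm x).1 := Nat.mod_add_div _ _
          have h6 : (⟨i + m * k, lt_of_lt_of_eq (idx_lt him hkk) hm.symm⟩ : Fin m') = ρ.symm x :=
            Fin.ext h5
          rw [h6, ρ.apply_symm_apply]
        obtain ⟨e1, e1c⟩ := hρ i him ((k + 1) % M) (Nat.mod_lt _ hMpos)
        obtain ⟨e2, e2c⟩ := hρ i him k hkk
        constructor
        · rw [e1, pow_mod_eq' ω hω.pow_eq_one (k+1)]
          conv_rhs => rw [hxeq, e2]
          rw [pow_succ]
          ring
        · rw [e1c, pow_mod_eq' σ hσM (k+1)]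
          conv_rhs => rw [hxeq, e2c]
          rw [pow_succ', Equiv.Perm.mul_apply]
  · rintro ⟨ψ, hinj, hprop⟩
    obtain ⟨m, hm, hrest⟩ := key_induction σ M hM hσM ω hω m' t c ht0 ⟨ψ, hinj, hprop⟩
    rcases Nat.eq_zero_or_pos m' with h0 | hpos
    · refine ⟨m, hm, Equiv.refl _, ?_⟩
      intro i hi k hk
      exfalso
      have hm0 : m = 0 := by
        rcases Nat.eq_zero_or_pos m with h | h
        · exact h
        · exfalso
          have : 0 < M * m := Nat.mul_pos (by omega) h
          omega
      omega
    · obtain ⟨ρn, hinjn, hpropn⟩ := hrest hpos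
      have hbij : Function.Bijective (fun x : Fin m' => ρn x.1) := by
        rw [← Finite.injective_iff_bijective]
        intro a b hab
        exact Fin.ext (hinjn a.1 b.1 a.isLt b.isLt hab)
      refine ⟨m, hm, Equiv.ofBijective _ hbij, ?_⟩
      intro i hi k hk
      simp only [Equiv.ofBijective_apply]
      exact hpropn i hi k hk

private lemma shift_imp_eq (σ : Equiv.Perm I) (M : ℕ) (hM : 1 ≤ M)
    (ω : ℂ) (hω : IsPrimitiveRoot ω M)
    {m' : ℕ} (t : Fin m' → ℂ) (c : Fin m' → I)
    (h : ∃ ψ : Fin m' → Fin m', Function.Injective ψ ∧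
        ∀ l, t (ψ l) = ω * t l ∧ c (ψ l) = σ (c l)) :
    ∀ j : I, (yPoly t c (σ j)).comp (C ω * X) =
      C (ω ^ (yPoly t c j).natDegree) * yPoly t c j := by
  obtain ⟨ψ, hinj, hprop⟩ := h
  have hdeg : ∀ j : I, (yPoly t c j).natDegree
      = (Finset.univ.filter (fun l => c l = j)).card := by
    intro j
    unfold yPoly
    rw [Polynomial.natDegree_prod _ _ (fun i _ => X_sub_C_ne_zero (t i))]
    simp [Polynomial.natDegree_X_sub_C]
  intro j
  have hbij := Finite.injective_iff_bijective.mp hinj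
  have himg : Finset.univ.filter (fun l => c l = σ j)
      = (Finset.univ.filter (fun l => c l = j)).image ψ := by
    ext l
    simp only [Finset.mem_filter, Finset.mem_image, Finset.mem_univ, true_and]
    constructor
    · intro hl
      obtain ⟨l', hl'⟩ := hbij.2 l
      refine ⟨l', ?_, hl'⟩
      have h1 := (hprop l').2
      rw [hl', hl] at h1
      exact (σ.injective h1).symm
    · rintro ⟨l', hcl', rfl⟩
      rw [(hprop l').2, hcl']
  conv_lhs => rw [yPoly, himg]
  rw [Finset.prod_image (fun a _ b _ hab => hinj hab), Polynomial.prod_comp]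
  have hfac : ∀ l ∈ Finset.univ.filter (fun l => c l = j),
      (X - C (t (ψ l))).comp (C ω * X) = C ω * (X - C (t l)) := by
    intro l _
    rw [(hprop l).1, sub_comp, X_comp, C_comp, mul_sub, ← C_mul]
  rw [Finset.prod_congr rfl hfac, Finset.prod_mul_distrib, Finset.prod_const,
    ← C_pow, hdeg j]
  rfl

private lemma eq_imp_shift (σ : Equiv.Perm I) (M : ℕ) (hM : 1 ≤ M)
    (ω : ℂ) (hω : IsPrimitiveRoot ω M)
    {m' : ℕ} (t : Fin m' → ℂ) (c : Fin m' → I) (ht0 : ∀ j, t j ≠ 0)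
    (hB : ∀ j : I, ∃ lamb : ℂ, lamb ≠ 0 ∧
        (yPoly t c (σ j)).comp (C ω * X) = C lamb * yPoly t c j) :
    ∃ ψ : Fin m' → Fin m', Function.Injective ψ ∧
      ∀ l, t (ψ l) = ω * t l ∧ c (ψ l) = σ (c l) := by
  have hω0 : ω ≠ 0 := hω.ne_zero (by omega)
  have hroots : ∀ j : I,
      (Finset.univ.filter (fun l => c l = j)).val.map t
      = (Finset.univ.filter (fun l => c l = σ j)).val.map (fun l => t l / ω) := by
    intro j
    obtain ⟨lamb, hl0, heq⟩ := hB j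
    set A' := Finset.univ.filter (fun l => c l = σ j) with hA'
    set A := Finset.univ.filter (fun l => c l = j) with hA
    have hLHS : (yPoly t c (σ j)).comp (C ω * X)
        = C (ω ^ A'.card) * ∏ l ∈ A', (X - C (t l / ω)) := by
      rw [yPoly, Polynomial.prod_comp]
      have hfac : ∀ l ∈ A', (X - C (t l)).comp (C ω * X)
          = C ω * (X - C (t l / ω)) := by
        intro l _
        rw [sub_comp, X_comp, C_comp, mul_sub, ← C_mul, mul_div_cancel₀ _ hω0]
      rw [Finset.prod_congr rfl hfac, Finset.prod_mul_distrib, Finset.prod_const, ← C_pow]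
    rw [hLHS] at heq
    have hmonic1 : (∏ l ∈ A', (X - C (t l / ω))).Monic :=
      monic_prod_of_monic _ _ (fun l _ => monic_X_sub_C _)
    have hmonic2 : (yPoly t c j).Monic :=
      monic_prod_of_monic _ _ (fun l _ => monic_X_sub_C _)
    have hlc : ω ^ A'.card = lamb := by
      have h1 := congrArg Polynomial.leadingCoeff heq
      rwa [Polynomial.leadingCoeff_mul, Polynomial.leadingCoeff_mul,
        Polynomial.leadingCoeff_C, Polynomial.leadingCoeff_C,
        hmonic1.leadingCoeff, hmonic2.leadingCoeff, mul_one, mul_one] at h1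
    rw [← hlc] at heq
    have hcancel : (∏ l ∈ A', (X - C (t l / ω))) = yPoly t c j :=
      mul_left_cancel₀ (Polynomial.C_ne_zero.mpr (by rw [hlc]; exact hl0)) heq
    have hr1 : (∏ l ∈ A', (X - C (t l / ω))).roots
        = A'.val.map (fun l => t l / ω) := by
      rw [Finset.prod_eq_multiset_prod]
      rw [show A'.val.map (fun l => X - C (t l / ω))
          = (A'.val.map (fun l => t l / ω)).map (fun a => X - C a) by
        rw [Multiset.map_map]; rfl]
      exact Polynomial.roots_multiset_prod_X_sub_C _
    have hr2 : (yPoly t c j).roots = A.val.map t := by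
      rw [yPoly, Finset.prod_eq_multiset_prod]
      rw [show A.val.map (fun l => X - C (t l))
          = (A.val.map t).map (fun a => X - C a) by
        rw [Multiset.map_map]; rfl]
      exact Polynomial.roots_multiset_prod_X_sub_C _
    rw [← hr2, ← hcancel, hr1]
  have hall : ∀ j : I, ∃ φ : Fin m' → Fin m',
      Set.MapsTo φ ↑(Finset.univ.filter (fun l => c l = j))
        ↑(Finset.univ.filter (fun l => c l = σ j)) ∧
      Set.InjOn φ ↑(Finset.univ.filter (fun l => c l = j)) ∧
      ∀ a ∈ Finset.univ.filter (fun l => c l = j), t (φ a) / ω = t a :=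
    fun j => exists_injOn_of_map_eq _ _ t (fun l => t l / ω) (hroots j)
  choose φ hmap hinjφ hval using hall
  have hkey : ∀ l : Fin m', c (φ (c l) l) = σ (c l) ∧ t (φ (c l) l) = ω * t l := by
    intro l
    have hmem : l ∈ Finset.univ.filter (fun x => c x = c l) := by simp
    have h1 := hmap (c l) (Finset.mem_coe.mpr hmem)
    rw [Finset.mem_coe, Finset.mem_filter] at h1
    refine ⟨h1.2, ?_⟩
    have h2 := hval (c l) l hmem
    rw [div_eq_iff hω0] at h2
    rw [h2]; ring
  refine ⟨fun l => φ (c l) l, ?_, fun l => ⟨(hkey l).2, (hkey l).1⟩⟩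
  intro a b hab
  simp only at hab
  have hcc : c a = c b := by
    apply σ.injective
    rw [← (hkey a).1, ← (hkey b).1, hab]
  rw [← hcc] at hab
  have hmema : a ∈ ↑(Finset.univ.filter (fun x => c x = c a)) :=
    Finset.mem_coe.mpr (by simp)
  have hmemb : b ∈ ↑(Finset.univ.filter (fun x => c x = c a)) :=
    Finset.mem_coe.mpr (by simp [hcc])
  exact hinjφ (c a) hmema hmemb hab

end glue

/-- Lemma 4.4: assuming all t_j ≠ 0, the pair (t,c) is a cyclotomic point
iff y_{σ(j)}(ωx) ≃ y_j(x) for all j; and, the y_i being monic, iff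
y_{σ(j)}(ωx) = ω^{deg y_j}·y_j(x) for all j. -/
theorem statement14
    {I : Type} [Fintype I] [DecidableEq I]
    (σ : Equiv.Perm I) (M : ℕ) (hM : 1 ≤ M) (hσM : σ ^ M = 1)
    (ω : ℂ) (hω : IsPrimitiveRoot ω M)
    {m' : ℕ} (t : Fin m' → ℂ) (c : Fin m' → I)
    (ht0 : ∀ j, t j ≠ 0) :
    (IsCycPoint σ M ω t c ↔
      ∀ j : I, ∃ lamb : ℂ, lamb ≠ 0 ∧
        (yPoly t c (σ j)).comp (C ω * X) = C lamb * yPoly t c j) ∧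
    (IsCycPoint σ M ω t c ↔
      ∀ j : I, (yPoly t c (σ j)).comp (C ω * X) =
        C (ω ^ (yPoly t c j).natDegree) * yPoly t c j) := by
  have hiff := cyc_iff_shift σ M hM hσM ω hω t c ht0
  have hCB : (∀ j : I, (yPoly t c (σ j)).comp (C ω * X)
        = C (ω ^ (yPoly t c j).natDegree) * yPoly t c j) →
      ∀ j : I, ∃ lamb : ℂ, lamb ≠ 0 ∧
        (yPoly t c (σ j)).comp (C ω * X) = C lamb * yPoly t c j := by
    intro h j
    exact ⟨ω ^ (yPoly t c j).natDegree, pow_ne_zero _ (hω.ne_zero (by omega)), h j⟩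
  constructor
  · constructor
    · intro hA
      exact hCB (shift_imp_eq σ M hM ω hω t c (hiff.1 hA))
    · intro hB
      exact hiff.2 (eq_imp_shift σ M hM ω hω t c ht0 hB)
  · constructor
    · intro hA
      exact shift_imp_eq σ M hM ω hω t c (hiff.1 hA)
    · intro hC
      exact hiff.2 (eq_imp_shift σ M hM ω hω t c ht0 (hCB hC))
end
end
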